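/- arXiv:0807.2658 — 2 statements merged into one kernel-verified Lean document; each statement's English description precedes it below -/
import Mathlib

section
/- Let ψ be the 4×4 rational matrix with rows (0, 0, 1/2, -1/2), (0, 0, -1, -1), (1, -1/2, 0, 0), (-1, -1/2, 0, 0). Define 8×8 matrices Ψ₁ = ψ ⊗̂ 1 and Ψ₂ = 1 ⊗̂ ψ as the block matrices given in the text: with respect to the ordered basis |000⟩,|011⟩,|101⟩,|110⟩,|001⟩,|010⟩,|100⟩,|111⟩, Ψ₁ has zero diagonal blocks and off-diagonal 4×4 blocks B (upper-right) and B (lower-left) where B has rows (0, 1/2, -1/2, 0), (1, 0, 0, -1/2), (-1, 0, 0, -1/2), (0, -1, -1, 0); Ψ₂ has zero diagonal blocks, upper-right block with rows (1/2, -1/2, 0, 0), (-1, -1, 0, 0), (0, 0, -1, 1/2), (0, 0, 1, 1/2), and lower-left block with rows (1, -1/2, 0, 0), (-1, -1/2, 0, 0), (0, 0, -1/2, 1/2), (0, 0, 1, 1). Then Ψ₁ Ψ₂ Ψ₁ = Ψ₂ Ψ₁ Ψ₂ (the Yang–Baxter equation). -/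
set_option maxHeartbeats 1000000 in
private lemma psi_aux (A E G : Matrix (Fin 4) (Fin 4) ℚ)
    (h1 : A * G * A = E * A * E) (h2 : A * E * A = G * A * G) :
    Matrix.fromBlocks 0 A A 0 * Matrix.fromBlocks 0 E G 0 * Matrix.fromBlocks 0 A A 0 =
    Matrix.fromBlocks 0 E G 0 * Matrix.fromBlocks 0 A A 0 * Matrix.fromBlocks 0 E G 0 := by
  simp only [Matrix.fromBlocks_multiply, Matrix.mul_zero, Matrix.zero_mul, add_zero, zero_add]
  rw [h1, h2]

set_option maxHeartbeats 1000000 in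
theorem psi_yang_baxter :
    let B : Matrix (Fin 4) (Fin 4) ℚ :=
      !![0, 1/2, -1/2, 0;
         1, 0, 0, -1/2;
         -1, 0, 0, -1/2;
         0, -1, -1, 0]
    let C : Matrix (Fin 4) (Fin 4) ℚ :=
      !![1/2, -1/2, 0, 0;
         -1, -1, 0, 0;
         0, 0, -1, 1/2;
         0, 0, 1, 1/2]
    let D : Matrix (Fin 4) (Fin 4) ℚ :=
      !![1, -1/2, 0, 0;
         -1, -1/2, 0, 0;
         0, 0, -1/2, 1/2;
         0, 0, 1, 1]
    let Ψ₁ : Matrix (Fin 4 ⊕ Fin 4) (Fin 4 ⊕ Fin 4) ℚ := Matrix.fromBlocks 0 B B 0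
    let Ψ₂ : Matrix (Fin 4 ⊕ Fin 4) (Fin 4 ⊕ Fin 4) ℚ := Matrix.fromBlocks 0 C D 0
    Ψ₁ * Ψ₂ * Ψ₁ = Ψ₂ * Ψ₁ * Ψ₂ := by
  intro B C D Ψ₁ Ψ₂
  apply psi_aux
  · ext i j
    fin_cases i <;> fin_cases j <;>
      simp [B, C, D, Matrix.mul_apply, Fin.sum_univ_four] <;> norm_num
  · ext i j
    fin_cases i <;> fin_cases j <;>
      simp [B, C, D, Matrix.mul_apply, Fin.sum_univ_four] <;> norm_num
end

section
/- Let R be a commutative ring and a₁, b₁, a₂, b₂, λ ∈ R. Consider the two-row Koszul factorization with differentials d₀ = [[a₁, b₂], [a₂, -b₁]] and d₁ = [[b₁, b₂], [a₂, -a₁]], and define new entries a₁' = a₁ - λa₂, b₁' = b₁, a₂' = a₂, b₂' = b₂ + λb₁, with corresponding differentials d₀' = [[a₁', b₂'], [a₂', -b₁']] and d₁' = [[b₁', b₂'], [a₂', -a₁']]. Set U₀ = Id (2×2) and U₁ = [[1, -λ], [0, 1]]. Then U₁ · d₀ = d₀' · U₀ and U₀ · d₁ = d₁' · U₁; in particular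 (U₀, U₁) is an isomorphism of matrix factorizations {a₁, b₁; a₂, b₂} ≅ {a₁ - λa₂, b₁; a₂, b₂ + λb₁}. -/
theorem koszul_row_operation (R : Type*) [CommRing R] (a₁ b₁ a₂ b₂ lam : R) :
    let d₀ : Matrix (Fin 2) (Fin 2) R := !![a₁, b₂; a₂, -b₁]
    let d₁ : Matrix (Fin 2) (Fin 2) R := !![b₁, b₂; a₂, -a₁]
    let a₁' := a₁ - lam * a₂
    let b₁' := b₁
    let a₂' := a₂
    let b₂' := b₂ + lam * b₁
    let d₀' : Matrix (Fin 2) (Fin 2) R := !![a₁', b₂'; a₂', -b₁']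
    let d₁' : Matrix (Fin 2) (Fin 2) R := !![b₁', b₂'; a₂', -a₁']
    let U₀ : Matrix (Fin 2) (Fin 2) R := 1
    let U₁ : Matrix (Fin 2) (Fin 2) R := !![1, -lam; 0, 1]
    U₁ * d₀ = d₀' * U₀ ∧ U₀ * d₁ = d₁' * U₁ := by
  constructor <;> ext i j <;> fin_cases i <;> fin_cases j <;>
    simp [Matrix.mul_apply, Fin.sum_univ_two] <;> ring
end
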